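/- For real x, y with |x| < 1/2 and |y| < 1/2, one has 1/(√(1-4x²) + √(1-4y²)) = ∑_{i,j even ≥ 0} a_{i+j} x^i y^j, where a_i = (1/(i+2))·C(i, i/2). -/

import Mathlib

open MeasureTheory ProbabilityTheory Finset


lemma catalan_le_four_pow (n : ℕ) : (catalan n : ℝ) ≤ 4 ^ n := by
  have h1 : catalan n ≤ (n + 1) * catalan n := Nat.le_mul_of_pos_left _ n.succ_pos
  rw [succ_mul_catalan_eq_centralBinom] at h1
  have h2 : Nat.centralBinom n ≤ 4 ^ n := by
    have : (2 * n).choose n ≤ ∑ m ∈ range (2 * n + 1), (2 * n).choose m :=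
      Finset.single_le_sum (fun i _ => Nat.zero_le _) (by simp; omega)
    rw [Nat.sum_range_choose] at this
    calc Nat.centralBinom n = (2 * n).choose n := rfl
      _ ≤ 2 ^ (2 * n) := this
      _ = 4 ^ n := by rw [pow_mul]; norm_num
  exact_mod_cast h1.trans h2

lemma summable_cat_abs {z : ℝ} (hz : |z| < 1 / 4) :
    Summable fun k : ℕ => |(catalan k : ℝ) * z ^ (k + 1)| := by
  have hg : Summable fun k : ℕ => |z| * (4 * |z|) ^ k :=
    (summable_geometric_of_lt_one (by positivity) (by linarith)).mul_left _
  refine Summable.of_nonneg_of_le (fun k => abs_nonneg _) (fun k => ?_) hg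
  have h1 : |(catalan k : ℝ) * z ^ (k + 1)| = (catalan k : ℝ) * |z| ^ (k + 1) := by
    rw [abs_mul, abs_pow, abs_of_nonneg (by positivity)]
  rw [h1]
  calc (catalan k : ℝ) * |z| ^ (k + 1) ≤ 4 ^ k * |z| ^ (k + 1) := by
        gcongr; exact catalan_le_four_pow k
    _ = |z| * (4 * |z|) ^ k := by ring

noncomputable def catS (z : ℝ) : ℝ := ∑' k : ℕ, (catalan k : ℝ) * z ^ (k + 1)

lemma catS_sq {z : ℝ} (hz : |z| < 1 / 4) : catS z * catS z = catS z - z := by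
  have hs := summable_cat_abs hz
  have h1 : catS z * catS z =
      ∑' n : ℕ, ∑ kl ∈ antidiagonal n,
        ((catalan kl.1 : ℝ) * z ^ (kl.1 + 1)) * ((catalan kl.2 : ℝ) * z ^ (kl.2 + 1)) :=
    tsum_mul_tsum_eq_tsum_sum_antidiagonal_of_summable_norm (hs.congr fun k => (Real.norm_eq_abs _).symm) (hs.congr fun k => (Real.norm_eq_abs _).symm)
  have h2 : ∀ n : ℕ, ∑ kl ∈ antidiagonal n,
      ((catalan kl.1 : ℝ) * z ^ (kl.1 + 1)) * ((catalan kl.2 : ℝ) * z ^ (kl.2 + 1))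
      = (catalan (n + 1) : ℝ) * z ^ (n + 2) := by
    intro n
    rw [catalan_succ']
    push_cast
    rw [Finset.sum_mul]
    refine Finset.sum_congr rfl fun kl hkl => ?_
    rw [Finset.HasAntidiagonal.mem_antidiagonal] at hkl
    have : kl.1 + 1 + (kl.2 + 1) = n + 2 := by omega
    rw [mul_mul_mul_comm, ← pow_add, this]
  have h3 : catS z = z + ∑' n : ℕ, (catalan (n + 1) : ℝ) * z ^ (n + 2) := by
    have := Summable.tsum_eq_zero_add (f := fun k : ℕ => (catalan k : ℝ) * z ^ (k + 1)) hs.of_abs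
    simpa [catS] using this
  rw [h1]
  simp_rw [h2]
  linarith [h3]

lemma catS_continuousOn {r : ℝ} (hr0 : 0 ≤ r) (hr : r < 1 / 4) :
    ContinuousOn catS (Set.Icc 0 r) := by
  · refine continuousOn_tsum (u := fun k => 4 ^ k * r ^ (k + 1))
      (fun k => (continuous_const.mul (continuous_pow (k+1))).continuousOn) ?_ ?_
    · have : Summable fun k : ℕ => r * (4 * r) ^ k :=
        (summable_geometric_of_lt_one (by positivity) (by linarith)).mul_left _
      exact this.congr fun k => by ring
    · intro k t ht
      rcases Set.mem_Icc.1 ht with ⟨h1, h2⟩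
      rw [Real.norm_eq_abs, abs_mul, abs_pow, abs_of_nonneg (by positivity : (0:ℝ) ≤ (catalan k : ℝ)), abs_of_nonneg h1]
      have hc := catalan_le_four_pow k
      have h2' : t ^ (k+1) ≤ r ^ (k+1) := pow_le_pow_left₀ h1 h2 _
      have ht1 : (0:ℝ) ≤ t ^ (k+1) := by positivity
      show (catalan k : ℝ) * t ^ (k+1) ≤ 4 ^ k * r ^ (k+1)
      exact mul_le_mul hc h2' ht1 (by positivity)

lemma catS_zero : catS 0 = 0 := by simp [catS]

lemma catS_eq {z : ℝ} (h0 : 0 ≤ z) (hz : z < 1 / 4) :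
    catS z = (1 - Real.sqrt (1 - 4 * z)) / 2 := by
  have key : ∀ t ∈ Set.Icc (0:ℝ) z, (2 * catS t - 1) ^ 2 = 1 - 4 * t := by
    intro t ht
    rcases Set.mem_Icc.1 ht with ⟨h1, h2⟩
    have := catS_sq (z := t) (by rw [abs_of_nonneg h1]; linarith)
    nlinarith [this]
  have hcont : ContinuousOn (fun t => 2 * catS t - 1) (Set.Icc 0 z) :=
    (continuousOn_const.mul (catS_continuousOn h0 hz)).sub continuousOn_const
  have hDz : 2 * catS z - 1 < 0 := by
    rcases lt_trichotomy (2 * catS z - 1) 0 with h | h | h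
    · exact h
    · exfalso
      have := key z (Set.mem_Icc.2 ⟨h0, le_refl z⟩)
      rw [h] at this
      nlinarith
    · exfalso
      have hsub := intermediate_value_Icc h0 hcont
      have h0' : (0:ℝ) ∈ Set.Icc (2 * catS 0 - 1) (2 * catS z - 1) := by
        rw [catS_zero]; constructor <;> [linarith; linarith]
      obtain ⟨t, ht, hDt⟩ := hsub h0'
      have := key t ht
      simp only at hDt
      rw [hDt] at this
      rcases Set.mem_Icc.1 ht with ⟨_, h2⟩
      nlinarith
  have hsq : (2 * catS z - 1) ^ 2 = 1 - 4 * z := key z (Set.mem_Icc.2 ⟨h0, le_refl z⟩)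
  have h1 : Real.sqrt (1 - 4 * z) = -(2 * catS z - 1) := by
    rw [← hsq, Real.sqrt_sq_eq_abs, abs_of_neg hDz]
  linarith

lemma hasSum_cat {z : ℝ} (h0 : 0 ≤ z) (hz : z < 1 / 4) :
    HasSum (fun k : ℕ => (catalan k : ℝ) * z ^ (k + 1)) ((1 - Real.sqrt (1 - 4 * z)) / 2) := by
  have hs := (summable_cat_abs (z := z) (by rw [abs_of_nonneg h0]; linarith)).of_abs
  have := hs.hasSum
  rwa [show ∑' k : ℕ, (catalan k : ℝ) * z ^ (k + 1) = (1 - Real.sqrt (1 - 4 * z)) / 2 from catS_eq h0 hz] at this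

noncomputable def cf (u v : ℝ) (p : ℕ × ℕ) : ℝ := (catalan (p.1 + p.2) : ℝ) * u ^ p.1 * v ^ p.2

lemma summable_cf_abs {u v : ℝ} (hu : |u| < 1 / 4) (hv : |v| < 1 / 4) :
    Summable fun p : ℕ × ℕ => |cf u v p| := by
  have hg : Summable fun p : ℕ × ℕ => (4 * |u|) ^ p.1 * (4 * |v|) ^ p.2 :=
    Summable.mul_of_nonneg (summable_geometric_of_lt_one (by positivity) (by linarith))
      (summable_geometric_of_lt_one (by positivity) (by linarith))
      (fun m => by positivity) (fun n => by positivity)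
  refine Summable.of_nonneg_of_le (fun p => abs_nonneg _) (fun p => ?_) hg
  have h1 : |cf u v p| = (catalan (p.1 + p.2) : ℝ) * |u| ^ p.1 * |v| ^ p.2 := by
    simp [cf, abs_mul, abs_pow, abs_of_nonneg (show (0:ℝ) ≤ (catalan (p.1+p.2) : ℝ) by positivity)]
  rw [h1]
  calc (catalan (p.1+p.2):ℝ) * |u| ^ p.1 * |v| ^ p.2
      ≤ 4 ^ (p.1 + p.2) * |u| ^ p.1 * |v| ^ p.2 := by
        exact mul_le_mul_of_nonneg_right
          (mul_le_mul_of_nonneg_right (catalan_le_four_pow _) (by positivity)) (by positivity)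
    _ = (4 * |u|) ^ p.1 * (4 * |v|) ^ p.2 := by rw [mul_pow, mul_pow, pow_add]; ring

lemma tsum_pair_eq {f : ℕ × ℕ → ℝ} (hf : Summable f) :
    ∑' p : ℕ × ℕ, f p = ∑' n : ℕ, ∑ kl ∈ antidiagonal n, f kl := by
  conv_rhs => enter [1]; ext n; rw [← Finset.sum_finset_coe, ← tsum_fintype (L := .unconditional _)]
  rw [← Finset.HasAntidiagonal.sigmaAntidiagonalEquivProd.tsum_eq f]
  exact Summable.tsum_sigma' (fun n => (hasSum_fintype _).summable)
    (Finset.HasAntidiagonal.sigmaAntidiagonalEquivProd.summable_iff.mpr hf)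

lemma tsum_cf_ne {u v : ℝ} (hu0 : 0 ≤ u) (hu : u < 1 / 4) (hv0 : 0 ≤ v) (hv : v < 1 / 4)
    (huv : u ≠ v) :
    ∑' p : ℕ × ℕ, cf u v p = 2 / (Real.sqrt (1 - 4 * u) + Real.sqrt (1 - 4 * v)) := by
  set A := Real.sqrt (1 - 4 * u) with hA
  set B := Real.sqrt (1 - 4 * v) with hB
  have hu' : |u| < 1 / 4 := by rw [abs_of_nonneg hu0]; linarith
  have hv' : |v| < 1 / 4 := by rw [abs_of_nonneg hv0]; linarith
  have hsum : Summable (cf u v) := (summable_cf_abs hu' hv').of_abs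
  set T := ∑' p : ℕ × ℕ, cf u v p with hT
  have h2 : Summable fun p : ℕ × ℕ => (u - v) * cf u v p := hsum.mul_left _
  have hinner : ∀ n : ℕ, ∑ kl ∈ antidiagonal n, (u - v) * cf u v kl
      = (catalan n : ℝ) * (u ^ (n + 1) - v ^ (n + 1)) := by
    intro n
    rw [Finset.Nat.sum_antidiagonal_eq_sum_range_succ_mk]
    have hterm : ∀ k ∈ range (n + 1), (u - v) * cf u v (k, n - k)
        = (catalan n : ℝ) * (u ^ k * v ^ (n - k) * (u - v)) := by
      intro k hk
      rw [mem_range] at hk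
      have hkn : k + (n - k) = n := by omega
      simp only [cf, hkn]
      ring
    rw [Finset.sum_congr rfl hterm, ← Finset.mul_sum, ← Finset.sum_mul]
    have hg := geom_sum₂_mul u v (n + 1)
    simp only [Nat.add_sub_cancel] at hg
    rw [hg]
  have hdiff : HasSum (fun n : ℕ => (catalan n : ℝ) * (u ^ (n + 1) - v ^ (n + 1)))
      ((1 - A) / 2 - (1 - B) / 2) := by
    have := (hasSum_cat hu0 hu).sub (hasSum_cat hv0 hv)
    refine this.congr_fun fun n => by ring
  have hmain : (u - v) * T = (B - A) / 2 := by
    rw [hT, ← tsum_mul_left, tsum_pair_eq h2]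
    simp_rw [hinner]
    rw [hdiff.tsum_eq]
    ring
  have hA0 : 0 < A := Real.sqrt_pos.mpr (by linarith)
  have hB0 : 0 < B := Real.sqrt_pos.mpr (by linarith)
  have hA2 : A ^ 2 = 1 - 4 * u := Real.sq_sqrt (by linarith)
  have hB2 : B ^ 2 = 1 - 4 * v := Real.sq_sqrt (by linarith)
  have hne : u - v ≠ 0 := sub_ne_zero.mpr huv
  have key2 : T * (A + B) = 2 := by
    apply mul_left_cancel₀ hne
    linear_combination (A + B) * hmain + (1 / 2) * hB2 - (1 / 2) * hA2
  rw [eq_div_iff (by positivity : A + B ≠ 0)]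
  exact key2

lemma tsum_cf {u v : ℝ} (hu0 : 0 ≤ u) (hu : u < 1 / 4) (hv0 : 0 ≤ v) (hv : v < 1 / 4) :
    ∑' p : ℕ × ℕ, cf u v p = 2 / (Real.sqrt (1 - 4 * u) + Real.sqrt (1 - 4 * v)) := by
  rcases ne_or_eq u v with huv | rfl
  · exact tsum_cf_ne hu0 hu hv0 hv huv
  set r : ℝ := (u + 1 / 4) / 2 with hr
  have hur : u < r := by rw [hr]; linarith
  have hr4 : r < 1 / 4 := by rw [hr]; linarith
  have hr0 : 0 ≤ r := by linarith
  -- continuity of G on Icc 0 r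
  set G : ℝ → ℝ := fun w => ∑' p : ℕ × ℕ, cf u w p with hG
  have hGc : ContinuousOn G (Set.Icc 0 r) := by
    refine continuousOn_tsum (u := fun p : ℕ × ℕ => (4 * u) ^ p.1 * (4 * r) ^ p.2)
      (fun p => ?_) ?_ ?_
    · show ContinuousOn (fun w => (catalan (p.1 + p.2) : ℝ) * u ^ p.1 * w ^ p.2) _
      fun_prop
    · exact Summable.mul_of_nonneg
        (summable_geometric_of_lt_one (by positivity) (by linarith))
        (summable_geometric_of_lt_one (by positivity) (by linarith))
        (fun m => by positivity) (fun n => by positivity)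
    · intro p w hw
      rcases Set.mem_Icc.1 hw with ⟨hw0, hwr⟩
      rw [Real.norm_eq_abs]
      have h1 : |cf u w p| = (catalan (p.1 + p.2) : ℝ) * u ^ p.1 * w ^ p.2 := by
        simp only [cf]
        rw [abs_of_nonneg (by positivity)]
      rw [h1]
      calc (catalan (p.1 + p.2) : ℝ) * u ^ p.1 * w ^ p.2
          ≤ 4 ^ (p.1 + p.2) * u ^ p.1 * r ^ p.2 := by
            refine mul_le_mul (mul_le_mul_of_nonneg_right (catalan_le_four_pow _)
              (by positivity)) (pow_le_pow_left₀ hw0 hwr _) (by positivity) (by positivity)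
        _ = (4 * u) ^ p.1 * (4 * r) ^ p.2 := by rw [mul_pow, mul_pow, pow_add]; ring
  -- the sequence
  set t : ℕ → ℝ := fun k => u + (r - u) / (k + 1) with ht
  have hru : 0 < r - u := by linarith
  have htmem : ∀ k, t k ∈ Set.Icc (0:ℝ) r := by
    intro k
    have hk1 : (1:ℝ) ≤ (k:ℝ) + 1 := by have := Nat.cast_nonneg (α := ℝ) k; linarith
    constructor
    · have : 0 ≤ (r - u) / ((k:ℝ) + 1) := div_nonneg hru.le (by positivity)
      simp only [ht]; linarith
    · simp only [ht]
      have : (r - u) / ((k:ℝ) + 1) ≤ (r - u) := by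
        rw [div_le_iff₀ (by positivity)]
        nlinarith
      linarith
  have htne : ∀ k, t k ≠ u := by
    intro k
    have : 0 < (r - u) / ((k:ℝ) + 1) := div_pos hru (by positivity)
    simp only [ht]; intro h; nlinarith [this]
  have htt : Filter.Tendsto t Filter.atTop (nhds u) := by
    have h0 : Filter.Tendsto (fun k : ℕ => (r - u) * (1 / ((k:ℝ) + 1))) Filter.atTop (nhds ((r - u) * 0)) :=
      tendsto_one_div_add_atTop_nhds_zero_nat.const_mul _
    have : Filter.Tendsto (fun k : ℕ => u + (r - u) / ((k:ℝ) + 1)) Filter.atTop (nhds (u + (r - u) * 0)) := by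
      refine Filter.Tendsto.add tendsto_const_nhds (h0.congr fun k => by ring)
    simpa using this
  set H : ℝ → ℝ := fun w => 2 / (Real.sqrt (1 - 4 * u) + Real.sqrt (1 - 4 * w)) with hH
  have hApos : 0 < Real.sqrt (1 - 4 * u) := Real.sqrt_pos.mpr (by linarith)
  have hHc : ContinuousAt H u := by
    refine ContinuousAt.div continuousAt_const ?_ (by positivity)
    exact (continuous_const.add (Real.continuous_sqrt.comp (by continuity))).continuousAt
  have hGH : ∀ k, G (t k) = H (t k) := by
    intro k
    rcases Set.mem_Icc.1 (htmem k) with ⟨h0, h1⟩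
    exact tsum_cf_ne hu0 hu h0 (lt_of_le_of_lt h1 hr4) (fun h => htne k h.symm) |>.trans rfl
  have hGlim : Filter.Tendsto (fun k => G (t k)) Filter.atTop (nhds (G u)) := by
    have hcw : ContinuousWithinAt G (Set.Icc 0 r) u :=
      hGc u (Set.mem_Icc.2 ⟨hu0, hur.le⟩)
    exact hcw.tendsto.comp (tendsto_nhdsWithin_of_tendsto_nhds_of_eventually_within t htt
      (Filter.Eventually.of_forall htmem))
  have hHlim : Filter.Tendsto (fun k => H (t k)) Filter.atTop (nhds (H u)) :=
    (hHc.tendsto).comp htt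
  have : G u = H u := tendsto_nhds_unique (hGlim.congr fun k => (hGH k)) hHlim
  exact this

noncomputable def aCoef (i : ℕ) : ℝ := (1 / ((i : ℝ) + 2)) * (i.choose (i / 2) : ℝ)

lemma aCoef_two_mul (k : ℕ) : aCoef (2 * k) = (catalan k : ℝ) / 2 := by
  have h1 : (2 * k) / 2 = k := Nat.mul_div_cancel_left k (by norm_num)
  have h2 : (2 * k).choose k = Nat.centralBinom k := rfl
  have h3 : ((k : ℝ) + 1) * (catalan k : ℝ) = (Nat.centralBinom k : ℝ) := by
    exact_mod_cast congrArg (Nat.cast (R := ℝ)) (succ_mul_catalan_eq_centralBinom k)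
  rw [aCoef, h1, h2]
  have hk : ((2 * k : ℕ) : ℝ) + 2 = 2 * ((k : ℝ) + 1) := by push_cast; ring
  rw [hk, ← h3]
  have : (k : ℝ) + 1 ≠ 0 := by positivity
  field_simp

theorem one_div_A_add_A (x y : ℝ) (hx : |x| < 1 / 2) (hy : |y| < 1 / 2) :
    (Summable fun q : ℕ × ℕ =>
        |if Even q.1 ∧ Even q.2 then aCoef (q.1 + q.2) * x ^ q.1 * y ^ q.2 else 0|) ∧
      1 / (Real.sqrt (1 - 4 * x ^ 2) + Real.sqrt (1 - 4 * y ^ 2))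
        = ∑' q : ℕ × ℕ,
            (if Even q.1 ∧ Even q.2 then aCoef (q.1 + q.2) * x ^ q.1 * y ^ q.2 else 0) := by
  set F : ℕ × ℕ → ℝ := fun q =>
    if Even q.1 ∧ Even q.2 then aCoef (q.1 + q.2) * x ^ q.1 * y ^ q.2 else 0 with hF
  have hu : x ^ 2 < 1 / 4 := by nlinarith [sq_abs x, abs_nonneg x]
  have hv : y ^ 2 < 1 / 4 := by nlinarith [sq_abs y, abs_nonneg y]
  have hu0 : 0 ≤ x ^ 2 := sq_nonneg x
  have hv0 : 0 ≤ y ^ 2 := sq_nonneg y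
  have hu' : |x ^ 2| < 1 / 4 := by rwa [abs_of_nonneg hu0]
  have hv' : |y ^ 2| < 1 / 4 := by rwa [abs_of_nonneg hv0]
  set e : ℕ × ℕ → ℕ × ℕ := fun p => (2 * p.1, 2 * p.2) with he
  have hinj : Function.Injective e := by
    rintro ⟨a, b⟩ ⟨c, d⟩ h
    simp only [he, Prod.mk.injEq] at h
    exact Prod.ext (by omega) (by omega)
  have hrange : ∀ q ∉ Set.range e, F q = 0 := by
    rintro ⟨a, b⟩ hq
    rw [hF]
    simp only
    rw [if_neg]
    rintro ⟨⟨a', ha⟩, ⟨b', hb⟩⟩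
    exact hq ⟨(a', b'), by simp only [he, Prod.mk.injEq]; omega⟩
  have hFe : ∀ p : ℕ × ℕ, F (e p) = (1 / 2) * cf (x ^ 2) (y ^ 2) p := by
    rintro ⟨m, n⟩
    simp only [hF, he]
    rw [if_pos ⟨even_two_mul m, even_two_mul n⟩]
    have hmn : 2 * m + 2 * n = 2 * (m + n) := by ring
    rw [hmn, aCoef_two_mul]
    simp only [cf]
    rw [pow_mul x 2 m, pow_mul y 2 n]
    ring
  have hsum_abs : Summable fun q : ℕ × ℕ => |F q| := by
    rw [← Function.Injective.summable_iff hinj (fun q hq => by rw [hrange q hq, abs_zero])]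
    have : Summable fun p : ℕ × ℕ => (1 / 2) * |cf (x ^ 2) (y ^ 2) p| :=
      (summable_cf_abs hu' hv').mul_left _
    refine this.congr fun p => ?_
    simp only [Function.comp_apply, hFe p, abs_mul, abs_of_nonneg (show (0:ℝ) ≤ 1/2 by norm_num)]
  refine ⟨hsum_abs, ?_⟩
  have hsum : Summable (cf (x ^ 2) (y ^ 2)) := (summable_cf_abs hu' hv').of_abs
  have hcf : HasSum (cf (x ^ 2) (y ^ 2))
      (2 / (Real.sqrt (1 - 4 * x ^ 2) + Real.sqrt (1 - 4 * y ^ 2))) := by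
    have := hsum.hasSum
    rwa [tsum_cf hu0 hu hv0 hv] at this
  have hhalf : HasSum (fun p => (1 / 2) * cf (x ^ 2) (y ^ 2) p)
      (1 / (Real.sqrt (1 - 4 * x ^ 2) + Real.sqrt (1 - 4 * y ^ 2))) := by
    have := hcf.mul_left (1 / 2)
    convert this using 1
    · rfl
    ring
  have hFeSum : HasSum (F ∘ e)
      (1 / (Real.sqrt (1 - 4 * x ^ 2) + Real.sqrt (1 - 4 * y ^ 2))) :=
    hhalf.congr_fun fun p => by rw [Function.comp_apply, hFe p]
  have hFSum := (Function.Injective.hasSum_iff hinj hrange).mp hFeSum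
  exact hFSum.tsum_eq.symm
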